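/- (Proposition 3, inequality) Let Λ ⊆ Γ be finite subsets of ℤ^n, let ψ(r) = Σ_{k∈Λ} c_k exp(2πi⟨k,r⟩) be a nonzero trigonometric polynomial, and let x_1, …, x_N ∈ ℝ^n be points with ψ(x_i) = 0 for all i. Then the |Γ| × N feature matrix Φ_Γ(X) = [φ_Γ(x_1), …, φ_Γ(x_N)], where φ_Γ(x) = (exp(2πi⟨k,x⟩))_{k∈Γ}, satisfies rank(Φ_Γ(X)) ≤ |Γ| − |Γ:Λ|, where |Γ:Λ| = #{m ∈ ℤ^n : m + Λ ⊆ Γ} is the number of valid shifts of Λ within Γ. -/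

import Mathlib

/-!
STATEMENT 8 (Proposition 3, inequality): if the points `x_1, …, x_N` lie on the zero
set of a nonzero trigonometric polynomial with Fourier support `Λ ⊆ Γ`, then the
feature matrix `Φ_Γ(X) = [φ_Γ(x_1), …, φ_Γ(x_N)]` satisfies
`rank(Φ_Γ(X)) ≤ |Γ| − |Γ:Λ|`, where `|Γ:Λ| = #{m ∈ ℤⁿ : m + Λ ⊆ Γ}`.
-/

open scoped BigOperators

/-- The inner product `⟨k, r⟩` of an integer frequency `k ∈ ℤⁿ` with a point `r ∈ ℝⁿ`. -/
noncomputable def intDot {n : ℕ} (k : Fin n → ℤ) (r : Fin n → ℝ) : ℝ :=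
  ∑ i, (k i : ℝ) * r i

/-- The exponential feature `exp(2πi⟨k, x⟩)`. -/
noncomputable def feat {n : ℕ} (k : Fin n → ℤ) (x : Fin n → ℝ) : ℂ :=
  Complex.exp (2 * Real.pi * Complex.I * (intDot k x : ℝ))

lemma feat_add {n : ℕ} (a b : Fin n → ℤ) (y : Fin n → ℝ) :
    feat (a + b) y = feat a y * feat b y := by
  have h : intDot (a + b) y = intDot a y + intDot b y := by
    simp only [intDot, ← Finset.sum_add_distrib]
    refine Finset.sum_congr rfl fun i _ => ?_
    push_cast [Pi.add_apply]
    ring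
  simp only [feat, h, Complex.ofReal_add, mul_add, Complex.exp_add]

open Matrix in
theorem feature_matrix_rank_bound {n : ℕ} (Λ Γ : Finset (Fin n → ℤ)) (hΛΓ : Λ ⊆ Γ)
    (c : (Fin n → ℤ) → ℂ) (hc : ∃ k ∈ Λ, c k ≠ 0)
    (N : ℕ) (x : Fin N → (Fin n → ℝ))
    (hon : ∀ i, ∑ k ∈ Λ, c k * feat k (x i) = 0) :
    (Matrix.of fun (k : {k // k ∈ Γ}) (i : Fin N) => feat k.1 (x i)).rank
      ≤ Γ.card - Set.ncard {m : Fin n → ℤ | ∀ k ∈ Λ, m + k ∈ Γ} := by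
  classical
  obtain ⟨k₀, hk₀Λ, hk₀⟩ := hc
  set S : Set (Fin n → ℤ) := {m | ∀ k ∈ Λ, m + k ∈ Γ} with hSdef
  have hSfin : S.Finite := by
    refine Set.Finite.subset (Γ.finite_toSet.image (fun γ => γ - k₀)) ?_
    intro m hm
    exact ⟨m + k₀, hm k₀ hk₀Λ, by simp⟩
  set M : Matrix {k // k ∈ Γ} (Fin N) ℂ :=
    Matrix.of fun (k : {k // k ∈ Γ}) (i : Fin N) => feat k.1 (x i) with hM
  set c' : (Fin n → ℤ) → ℂ := fun k => if k ∈ Λ then c k else 0 with hc'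
  set v : (Fin n → ℤ) → ({k // k ∈ Γ} → ℂ) := fun m γ => c' (γ.1 - m) with hv
  -- each valid shift gives a kernel vector of Mᵀ
  have hker : ∀ m ∈ S, Mᵀ.mulVecLin (v m) = 0 := by
    intro m hm
    funext i
    have h1 : Mᵀ.mulVecLin (v m) i = ∑ γ : {k // k ∈ Γ}, feat γ.1 (x i) * c' (γ.1 - m) := by
      simp [Matrix.mulVecLin, Matrix.mulVec, dotProduct, hM, hv, Matrix.transpose]
    rw [h1]
    rw [Finset.sum_coe_sort Γ (fun γ => feat γ (x i) * c' (γ - m))]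
    have hsub : Λ.image (fun k => m + k) ⊆ Γ := by
      intro γ hγ
      obtain ⟨k, hk, rfl⟩ := Finset.mem_image.mp hγ
      exact hm k hk
    rw [← Finset.sum_subset hsub (by
      intro γ _ hγ
      have : γ - m ∉ Λ := by
        intro h
        exact hγ (Finset.mem_image.mpr ⟨γ - m, h, by abel⟩)
      simp [hc', this])]
    rw [Finset.sum_image (by intro a _ b _ h; exact add_left_cancel h)]
    have : ∀ k ∈ Λ, feat (m + k) (x i) * c' (m + k - m) = feat m (x i) * (c k * feat k (x i)) := by
      intro k hk
      have : m + k - m = k := by abel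
      rw [this, feat_add]
      have hck : c' k = c k := by simp [hc', hk]
      rw [hck]; ring
    rw [Finset.sum_congr rfl this, ← Finset.mul_sum, hon i, mul_zero]
    simp
  -- linear independence of the kernel vectors
  have hLI : LinearIndependent ℂ (fun m : hSfin.toFinset => v m.1) := by
    rw [Fintype.linearIndependent_iff]
    intro g hg m₀
    -- work in the group algebra
    set A := AddMonoidAlgebra ℂ (Fin n → ℤ)
    set F : A := ∑ k ∈ Λ, AddMonoidAlgebra.single k (c k) with hF
    have hFapp : ∀ k, F.coeff k = c' k := by
      intro k
      rw [hF, AddMonoidAlgebra.coeff_sum, Finsupp.finset_sum_apply]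
      simp only [AddMonoidAlgebra.coeff_single, Finsupp.single_apply]
      rw [Finset.sum_ite_eq' Λ k c]
    have hFne : F ≠ 0 := by
      intro h
      have := hFapp k₀
      rw [h] at this
      simp [hc', hk₀Λ] at this
      exact hk₀ this.symm
    set G : A := ∑ m : hSfin.toFinset, AddMonoidAlgebra.single m.1 (g m) with hG
    have hGF : G * F = 0 := by
      ext γ
      have h1 : (G * F).coeff γ = ∑ m : hSfin.toFinset, g m * c' (γ - m.1) := by
        rw [hG, Finset.sum_mul, AddMonoidAlgebra.coeff_sum, Finsupp.finset_sum_apply]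
        refine Finset.sum_congr rfl fun m _ => ?_
        rw [AddMonoidAlgebra.coeff_single_mul_apply, hFapp, neg_add_eq_sub]
      rw [h1, AddMonoidAlgebra.coeff_zero, Finsupp.coe_zero, Pi.zero_apply]
      by_cases hγ : γ ∈ Γ
      · have := congrFun hg ⟨γ, hγ⟩
        simpa [hv] using this
      · refine Finset.sum_eq_zero fun m _ => ?_
        have hmS : m.1 ∈ S := hSfin.mem_toFinset.mp m.2
        have : γ - m.1 ∉ Λ := by
          intro h
          exact hγ (by simpa using hmS _ h)
        simp [hc', this]
    have hG0 : G = 0 := by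
      rcases mul_eq_zero.mp hGF with h | h
      · exact h
      · exact absurd h hFne
    have : G.coeff m₀.1 = g m₀ := by
      rw [hG, AddMonoidAlgebra.coeff_sum, Finsupp.finset_sum_apply]
      simp only [AddMonoidAlgebra.coeff_single, Finsupp.single_apply]
      rw [Finset.sum_eq_single m₀]
      · simp
      · intro m _ hne
        exact if_neg fun h => hne (Subtype.ext h)
      · intro h
        exact absurd (Finset.mem_univ m₀) h
    rw [hG0] at this
    simpa using this.symm
  -- conclude via rank-nullity
  have hrankT : Mᵀ.rank = M.rank := Matrix.rank_transpose M
  have hdef : Mᵀ.rank = Module.finrank ℂ (LinearMap.range Mᵀ.mulVecLin) := rfl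
  have hrn := LinearMap.finrank_range_add_finrank_ker Mᵀ.mulVecLin
  have hdim : Module.finrank ℂ ({k // k ∈ Γ} → ℂ) = Γ.card := by
    rw [Module.finrank_fintype_fun_eq_card, Fintype.card_coe]
  -- kernel vectors form independent family inside ker
  have hcard : hSfin.toFinset.card ≤ Module.finrank ℂ (LinearMap.ker Mᵀ.mulVecLin) := by
    have hw : LinearIndependent ℂ
        (fun m : hSfin.toFinset =>
          (⟨v m.1, by
            rw [LinearMap.mem_ker]
            exact hker m.1 (hSfin.mem_toFinset.mp m.2)⟩ :
            LinearMap.ker Mᵀ.mulVecLin)) := by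
      apply LinearIndependent.of_comp (LinearMap.ker Mᵀ.mulVecLin).subtype
      exact hLI
    simpa using hw.fintype_card_le_finrank
  have hncard : S.ncard = hSfin.toFinset.card := Set.ncard_eq_toFinset_card S hSfin
  rw [hdim] at hrn
  rw [← hrankT, hdef, hncard]
  omega
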